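/- arXiv:2506.12852 — 3 statements merged into one kernel-verified Lean document; each statement's English description precedes it below -/
import Mathlib

section
/- Let p ≠ 0 be a homogeneous polynomial of degree d on ℝ^k. Then the set V = {y₀ ∈ ℝ^k : ord_p(y₀) ≥ d} is a linear subspace of ℝ^k, and p is invariant under translations by elements of V, i.e., p(y + y₀) = p(y) for all y ∈ ℝ^k and y₀ ∈ V. -/
open MvPolynomial

/-- The Taylor expansion of `p` about `y₀`, i.e. the polynomial `z ↦ p(z + y₀)`. -/
noncomputable def taylorShift {k : ℕ} (p : MvPolynomial (Fin k) ℝ) (y₀ : Fin k → ℝ) :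
    MvPolynomial (Fin k) ℝ :=
  aeval (fun i => X i + C (y₀ i)) p

/-- `ordGE p y₀ d` : the order of vanishing `ord_p(y₀)` of `p` at `y₀` (the degree of the
lowest-order nonzero term of the Taylor expansion of `p` about `y₀`) is at least `d`. -/
def ordGE {k : ℕ} (p : MvPolynomial (Fin k) ℝ) (y₀ : Fin k → ℝ) (d : ℕ) : Prop :=
  ∀ m ∈ (taylorShift p y₀).support, d ≤ m.sum fun _ e => e

lemma eval_taylorShift {k : ℕ} (p : MvPolynomial (Fin k) ℝ) (y₀ z : Fin k → ℝ) :
    eval z (taylorShift p y₀) = eval (z + y₀) p := by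
  have h := comp_aeval_apply (f := fun i => X i + C (y₀ i))
    (MvPolynomial.aeval (R := ℝ) z) p
  simpa [taylorShift, Pi.add_def] using h

lemma eval_smul_of_hom {k d : ℕ} (p : MvPolynomial (Fin k) ℝ) (hhom : p.IsHomogeneous d)
    (t : ℝ) (z : Fin k → ℝ) : eval (t • z) p = t ^ d * eval z p := by
  rw [eval_eq, eval_eq, Finset.mul_sum]
  refine Finset.sum_congr rfl fun m hm => ?_
  have hdeg : (m.sum fun _ e => e) = d := by
    have := hhom (mem_support_iff.mp hm)
    rw [← this, Pi.one_def, ← Finsupp.degree_eq_weight_one]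
    rfl
  have : (∏ i ∈ m.support, (t • z) i ^ m i)
      = t ^ d * ∏ i ∈ m.support, z i ^ m i := by
    rw [← hdeg, Finsupp.sum, ← Finset.prod_pow_eq_pow_sum, ← Finset.prod_mul_distrib]
    exact Finset.prod_congr rfl fun i _ => by simp [mul_pow]
  rw [this]; ring

lemma taylorShift_totalDegree_le {k : ℕ} (p : MvPolynomial (Fin k) ℝ) (y₀ : Fin k → ℝ) :
    (taylorShift p y₀).totalDegree ≤ p.totalDegree := by
  unfold taylorShift
  conv_lhs => rw [p.as_sum]
  rw [map_sum]
  apply totalDegree_finsetSum_le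
  intro m hm
  rw [aeval_monomial]
  refine le_trans (totalDegree_mul _ _) ?_
  have h1 : ((algebraMap ℝ (MvPolynomial (Fin k) ℝ)) (coeff m p)).totalDegree = 0 :=
    totalDegree_C _
  rw [h1, zero_add, Finsupp.prod]
  refine le_trans (totalDegree_finset_prod _ _) (le_trans ?_ (le_totalDegree hm))
  rw [Finsupp.sum]
  refine Finset.sum_le_sum fun i _ => ?_
  refine le_trans (totalDegree_pow _ _) ?_
  have : (X i + C (y₀ i) : MvPolynomial (Fin k) ℝ).totalDegree ≤ 1 := by
    refine le_trans (totalDegree_add _ _) ?_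
    simp [totalDegree_X, totalDegree_C]
  calc m i * (X i + C (y₀ i) : MvPolynomial (Fin k) ℝ).totalDegree ≤ m i * 1 :=
        Nat.mul_le_mul_left _ this
    _ = m i := mul_one _

lemma ordGE_imp {k : ℕ} (p : MvPolynomial (Fin k) ℝ) (hp : p ≠ 0) (d : ℕ)
    (hhom : p.IsHomogeneous d) (y₀ : Fin k → ℝ) (h : ordGE p y₀ d) :
    ∀ y : Fin k → ℝ, eval (y + y₀) p = eval y p := by
  -- taylorShift p y₀ is homogeneous of degree d
  have htd : (taylorShift p y₀).totalDegree ≤ d :=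
    le_trans (taylorShift_totalDegree_le p y₀) hhom.totalDegree_le
  have hq : (taylorShift p y₀).IsHomogeneous d := by
    intro m hm
    rw [Pi.one_def, ← Finsupp.degree_eq_weight_one]
    have h1 : d ≤ m.sum fun _ e => e := h m (mem_support_iff.mpr hm)
    have h2 : (m.sum fun _ e => e) ≤ d :=
      le_trans (le_totalDegree (mem_support_iff.mpr hm)) htd
    have : (m.sum fun _ e => e) = d := le_antisymm h2 h1
    rw [← this]; rfl
  -- key identity : p(w + y₀) = p(w + 2 y₀)
  have key : ∀ w : Fin k → ℝ, eval (w + y₀) p = eval (w + (2:ℝ) • y₀) p := by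
    intro w
    have e1 : eval ((2:ℝ) • ((2:ℝ)⁻¹ • w) + y₀) p
        = (2:ℝ) ^ d * eval ((2:ℝ)⁻¹ • w + y₀) p := by
      rw [← eval_taylorShift, ← eval_taylorShift, eval_smul_of_hom _ hq]
    have e2 : eval ((2:ℝ) • ((2:ℝ)⁻¹ • w + y₀)) p
        = (2:ℝ) ^ d * eval ((2:ℝ)⁻¹ • w + y₀) p := eval_smul_of_hom p hhom _ _
    have hw : (2:ℝ) • ((2:ℝ)⁻¹ • w) = w := by
      rw [smul_smul]; norm_num
    rw [hw] at e1
    rw [smul_add, hw] at e2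
    rw [e1, ← e2]
  intro y
  have h1 := key (y - (2:ℝ) • y₀)
  have h2 := key y  -- not needed maybe
  have e3 : y - (2:ℝ) • y₀ + (2:ℝ) • y₀ = y := by abel
  have e4 : y - (2:ℝ) • y₀ + y₀ = y - y₀ := by
    rw [two_smul]; abel
  rw [e3, e4] at h1
  -- h1 : eval (y - y₀) p = eval y p
  have := key  -- general: p(w - y₀) = p(w); apply at w := y + y₀
  have h5 := h1  -- eval (y - y₀) p = eval y p for this y; we need it at y + y₀
  -- redo with y := y + y₀
  have h6 := key (y + y₀ - (2:ℝ) • y₀)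
  have e5 : y + y₀ - (2:ℝ) • y₀ + (2:ℝ) • y₀ = y + y₀ := by abel
  have e6 : y + y₀ - (2:ℝ) • y₀ + y₀ = y := by rw [two_smul]; abel
  rw [e5, e6] at h6
  exact h6.symm

/-- for a homogeneous polynomial `p ≠ 0` of degree `d` on `ℝᵏ`, the set
`V = {y₀ : ord_p(y₀) ≥ d}` is a linear subspace of `ℝᵏ`, and `p` is invariant under
translations by elements of `V`. -/
theorem high_order_set_is_subspace_and_translation_invariance {k : ℕ}
    (p : MvPolynomial (Fin k) ℝ) (hp : p ≠ 0) (d : ℕ) (hhom : p.IsHomogeneous d) :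
    ∃ V : Submodule ℝ (Fin k → ℝ),
      (V : Set (Fin k → ℝ)) = {y₀ : Fin k → ℝ | ordGE p y₀ d} ∧
      ∀ y₀ ∈ V, ∀ y : Fin k → ℝ, eval (y + y₀) p = eval y p := by
  refine ⟨{
    carrier := {y₀ | ∀ y : Fin k → ℝ, eval (y + y₀) p = eval y p}
    add_mem' := ?_
    zero_mem' := ?_
    smul_mem' := ?_ }, ?_, ?_⟩
  · intro a b ha hb y
    have : y + (a + b) = (y + b) + a := by abel
    rw [this, ha (y + b), hb y]
  · intro y; rw [add_zero]
  · intro c y₀ h y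
    rcases eq_or_ne c 0 with rfl | hc
    · rw [zero_smul, add_zero]
    · have e1 : y + c • y₀ = c • (c⁻¹ • y + y₀) := by
        rw [smul_add, smul_smul, mul_inv_cancel₀ hc, one_smul]
      rw [e1, eval_smul_of_hom p hhom, h (c⁻¹ • y), eval_smul_of_hom p hhom,
        ← mul_assoc, ← mul_pow, mul_inv_cancel₀ hc, one_pow, one_mul]
  · ext y₀
    simp only [SetLike.mem_coe, Set.mem_setOf_eq]
    constructor
    · intro h m hm
      -- taylorShift p y₀ = p
      have hts : taylorShift p y₀ = p :=
        MvPolynomial.funext fun z => by rw [eval_taylorShift, h z]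
      rw [hts] at hm
      have := hhom (mem_support_iff.mp hm)
      rw [Pi.one_def, ← Finsupp.degree_eq_weight_one] at this
      exact le_of_eq this.symm
    · exact ordGE_imp p hp d hhom y₀
  · intro y₀ h y
    exact h y
end

section
/- Suppose ‖Σ ∩ B_ρ‖² := Σ_{d∈Γ} c_d² ρ^{n+2d} for ρ ∈ (0,R), with Γ ⊂ ℝ discrete and not all c_d zero. Define the decay order G(ρ) := 1 + (1/2)log₂((2ρ)^{−n−2} F(2ρ)) − (1/2)log₂(ρ^{−n−2} F(ρ)), where F(ρ) = Σ_d c_d² ρ^{n+2d}. Then ρ ↦ G(ρ) is non-decreasing on (0, R/2), and the limit lim_{ρ→0} G(ρ) equals d₀ := min{d ∈ Γ : c_d ≠ 0}. -/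
open Set Filter

private lemma term_ineq {a b w1 w2 e1 e2 : ℝ} (ha : 0 < a) (hab : a ≤ b)
    (hw1 : 0 ≤ w1) (hw2 : 0 ≤ w2) :
    w1 * (2*a) ^ e1 * (w2 * b ^ e2) + w2 * (2*a) ^ e2 * (w1 * b ^ e1)
      ≤ w1 * a ^ e1 * (w2 * (2*b) ^ e2) + w2 * a ^ e2 * (w1 * (2*b) ^ e1) := by
  have hb : 0 < b := ha.trans_le hab
  have m2a : ∀ e : ℝ, (2*a) ^ e = 2 ^ e * a ^ e := fun e => Real.mul_rpow (by norm_num) ha.le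
  have m2b : ∀ e : ℝ, (2*b) ^ e = 2 ^ e * b ^ e := fun e => Real.mul_rpow (by norm_num) hb.le
  rw [m2a, m2a, m2b, m2b]
  -- reduce to (y - x) * (u - v) ≥ 0 with x = 2^e1, y = 2^e2, u = a^e1 b^e2, v = a^e2 b^e1
  have key : 2 ^ e1 * (a ^ e1 * b ^ e2) + 2 ^ e2 * (a ^ e2 * b ^ e1)
      ≤ 2 ^ e2 * (a ^ e1 * b ^ e2) + 2 ^ e1 * (a ^ e2 * b ^ e1) := by
    rcases le_total e1 e2 with h | h
    · have hx : (2:ℝ) ^ e1 ≤ 2 ^ e2 := Real.rpow_le_rpow_of_exponent_le one_le_two h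
      have huv : a ^ e2 * b ^ e1 ≤ a ^ e1 * b ^ e2 := by
        have h1 : a ^ e2 = a ^ e1 * a ^ (e2 - e1) := by
          rw [← Real.rpow_add ha]; ring_nf
        have h2 : b ^ e2 = b ^ e1 * b ^ (e2 - e1) := by
          rw [← Real.rpow_add hb]; ring_nf
        have h3 : a ^ (e2 - e1) ≤ b ^ (e2 - e1) :=
          Real.rpow_le_rpow ha.le hab (sub_nonneg.mpr h)
        have ha1 : 0 ≤ a ^ e1 := (Real.rpow_pos_of_pos ha _).le
        have hb1 : 0 ≤ b ^ e1 := (Real.rpow_pos_of_pos hb _).le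
        rw [h1, h2]
        have h4 := mul_le_mul_of_nonneg_left h3 (mul_nonneg ha1 hb1)
        nlinarith [h4]
      nlinarith
    · have hx : (2:ℝ) ^ e2 ≤ 2 ^ e1 := Real.rpow_le_rpow_of_exponent_le one_le_two h
      have huv : a ^ e1 * b ^ e2 ≤ a ^ e2 * b ^ e1 := by
        have h1 : a ^ e1 = a ^ e2 * a ^ (e1 - e2) := by
          rw [← Real.rpow_add ha]; ring_nf
        have h2 : b ^ e1 = b ^ e2 * b ^ (e1 - e2) := by
          rw [← Real.rpow_add hb]; ring_nf
        have h3 : a ^ (e1 - e2) ≤ b ^ (e1 - e2) :=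
          Real.rpow_le_rpow ha.le hab (sub_nonneg.mpr h)
        have ha1 : 0 ≤ a ^ e2 := (Real.rpow_pos_of_pos ha _).le
        have hb1 : 0 ≤ b ^ e2 := (Real.rpow_pos_of_pos hb _).le
        rw [h1, h2]
        have h4 := mul_le_mul_of_nonneg_left h3 (mul_nonneg ha1 hb1)
        nlinarith [h4]
      nlinarith
  nlinarith [mul_nonneg hw1 hw2, key, mul_le_mul_of_nonneg_left key (mul_nonneg hw1 hw2)]

set_option maxHeartbeats 1000000 in
private lemma sum_sq_ineq {ι : Type*} (w ex : ι → ℝ) (hw : ∀ i, 0 ≤ w i)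
    {a b : ℝ} (ha : 0 < a) (hab : a ≤ b)
    (h2a : Summable fun i => w i * (2*a) ^ (ex i))
    (hsb : Summable fun i => w i * b ^ (ex i))
    (hsa : Summable fun i => w i * a ^ (ex i))
    (h2b : Summable fun i => w i * (2*b) ^ (ex i)) :
    (∑' i, w i * (2*a) ^ (ex i)) * (∑' i, w i * b ^ (ex i))
      ≤ (∑' i, w i * a ^ (ex i)) * (∑' i, w i * (2*b) ^ (ex i)) := by
  have hb : 0 < b := ha.trans_le hab
  have nn : ∀ (ρ : ℝ), 0 ≤ ρ → ∀ i, 0 ≤ w i * ρ ^ (ex i) := fun ρ hρ i =>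
    mul_nonneg (hw i) (Real.rpow_nonneg hρ _)
  set L : ι × ι → ℝ := fun p => w p.1 * (2*a) ^ (ex p.1) * (w p.2 * b ^ (ex p.2)) with hL
  set Rt : ι × ι → ℝ := fun p => w p.1 * a ^ (ex p.1) * (w p.2 * (2*b) ^ (ex p.2)) with hRt
  have hLsum : Summable L := h2a.mul_of_nonneg hsb (nn _ (by positivity)) (nn _ hb.le)
  have hRsum : Summable Rt := hsa.mul_of_nonneg h2b (nn _ ha.le) (nn _ (by positivity))
  have norm1 : ∀ (f : ι → ℝ), (∀ i, 0 ≤ f i) → Summable f → Summable fun i => ‖f i‖ := by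
    intro f hf hs
    refine hs.congr fun i => ?_
    rw [Real.norm_of_nonneg (hf i)]
  rw [tsum_mul_tsum_of_summable_norm (norm1 _ (nn _ (by positivity)) h2a)
      (norm1 _ (nn _ hb.le) hsb),
    tsum_mul_tsum_of_summable_norm (norm1 _ (nn _ ha.le) hsa)
      (norm1 _ (nn _ (by positivity)) h2b)]
  -- symmetrize
  have hLs : Summable fun p : ι × ι => L p.swap := hLsum.comp_injective Prod.swap_injective
  have hRs : Summable fun p : ι × ι => Rt p.swap := hRsum.comp_injective Prod.swap_injective
  have eL : ∑' p : ι × ι, L p.swap = ∑' p, L p := (Equiv.prodComm ι ι).tsum_eq L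
  have eR : ∑' p : ι × ι, Rt p.swap = ∑' p, Rt p := (Equiv.prodComm ι ι).tsum_eq Rt
  have hterm : ∀ p : ι × ι, L p + L p.swap ≤ Rt p + Rt p.swap := by
    intro ⟨i, j⟩
    exact term_ineq ha hab (hw i) (hw j)
  have hsum2 : ∑' p : ι × ι, (L p + L p.swap) ≤ ∑' p : ι × ι, (Rt p + Rt p.swap) :=
    Summable.tsum_le_tsum hterm (hLsum.add hLs) (hRsum.add hRs)
  rw [Summable.tsum_add hLsum hLs, Summable.tsum_add hRsum hRs, eL, eR] at hsum2
  linarith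

set_option maxHeartbeats 1000000 in
/-- suppose `F(ρ) = Σ_{d∈Γ} c_d² ρ^{n+2d}` for `ρ ∈ (0,R)`, with `Γ ⊂ ℝ`
discrete, `(c_d)` nonnegative and not all zero (with least nonzero-coefficient degree
`d₀ = min {d ∈ Γ : c_d ≠ 0}`).  Then the decay order
`G(ρ) := 1 + ½ log₂((2ρ)^{−n−2} F(2ρ)) − ½ log₂(ρ^{−n−2} F(ρ))` is non-decreasing on
`(0, R/2)` and `G(ρ) → d₀` as `ρ → 0⁺`. -/
theorem decay_order_monotone_and_limit (Γ : Set ℝ) (hΓ : DiscreteTopology Γ)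
    (c : ℝ → ℝ) (hc : ∀ d, 0 ≤ c d) (n R : ℝ) (hR : 0 < R)
    (hsum : ∀ ρ ∈ Set.Ioo (0 : ℝ) R, Summable fun d : Γ => (c d) ^ 2 * ρ ^ (n + 2 * (d : ℝ)))
    (d₀ : ℝ) (hd₀ : IsLeast {d : ℝ | d ∈ Γ ∧ c d ≠ 0} d₀) :
    let F : ℝ → ℝ := fun ρ => ∑' d : Γ, (c d) ^ 2 * ρ ^ (n + 2 * (d : ℝ))
    let G : ℝ → ℝ := fun ρ =>
      1 + (1 / 2) * Real.logb 2 ((2 * ρ) ^ (-n - 2) * F (2 * ρ))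
        - (1 / 2) * Real.logb 2 (ρ ^ (-n - 2) * F ρ)
    MonotoneOn G (Set.Ioo 0 (R / 2)) ∧
      Filter.Tendsto G (nhdsWithin 0 (Set.Ioi 0)) (nhds d₀) := by
  classical
  intro F G
  obtain ⟨⟨hd₀Γ, hc₀⟩, hlb⟩ := hd₀
  have hcpos : 0 < c d₀ := lt_of_le_of_ne (hc d₀) (Ne.symm hc₀)
  set S : ℝ → ℝ := fun ρ => ∑' d : Γ, (c d)^2 * ρ ^ (2 * (d:ℝ)) with hSdef
  have summS : ∀ ρ ∈ Set.Ioo (0:ℝ) R, Summable fun d : Γ => (c d)^2 * ρ ^ (2*(d:ℝ)) := by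
    intro ρ hρ
    have h := (hsum ρ hρ).mul_right (ρ ^ (-n))
    refine h.congr fun d => ?_
    rw [mul_assoc, ← Real.rpow_add hρ.1, show n + 2*(d:ℝ) + -n = 2*(d:ℝ) by ring]
  have Fdec : ∀ ρ ∈ Set.Ioo (0:ℝ) R, F ρ = ρ ^ n * S ρ := by
    intro ρ hρ
    rw [hSdef]
    simp only [F]
    rw [← tsum_mul_left]
    exact tsum_congr fun d => by rw [Real.rpow_add hρ.1]; ring
  have Spos : ∀ ρ ∈ Set.Ioo (0:ℝ) R, 0 < S ρ := by
    intro ρ hρ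
    refine Summable.tsum_pos (summS ρ hρ) (fun i => mul_nonneg (sq_nonneg _) (Real.rpow_nonneg hρ.1.le _))
      ⟨d₀, hd₀Γ⟩ ?_
    exact mul_pos (pow_pos hcpos 2) (Real.rpow_pos_of_pos hρ.1 _)
  have hlog2 : (0:ℝ) < Real.log 2 := Real.log_pos one_lt_two
  have Gform : ∀ ρ ∈ Set.Ioo (0:ℝ) (R/2),
      G ρ = (Real.log (S (2*ρ)) - Real.log (S ρ)) / (2 * Real.log 2) := by
    intro ρ hρ
    have hρ0 : 0 < ρ := hρ.1
    have h2ρ : (2*ρ) ∈ Set.Ioo (0:ℝ) R := ⟨by linarith, by linarith [hρ.2]⟩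
    have hρI : ρ ∈ Set.Ioo (0:ℝ) R := ⟨hρ0, by linarith [hρ.2]⟩
    have h2ρ0 : (0:ℝ) < 2*ρ := by linarith
    simp only [G, Fdec _ h2ρ, Fdec _ hρI]
    have e1 : (2*ρ)^(-n-2) * ((2*ρ)^n * S (2*ρ)) = (2*ρ)^(-(2:ℝ)) * S (2*ρ) := by
      rw [← mul_assoc, ← Real.rpow_add h2ρ0, show -n-2+n = -(2:ℝ) by ring]
    have e2 : ρ^(-n-2) * (ρ^n * S ρ) = ρ^(-(2:ℝ)) * S ρ := by
      rw [← mul_assoc, ← Real.rpow_add hρ0, show -n-2+n = -(2:ℝ) by ring]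
    rw [e1, e2]
    have l1 : Real.log ((2*ρ)^(-(2:ℝ)) * S (2*ρ))
        = -2 * (Real.log 2 + Real.log ρ) + Real.log (S (2*ρ)) := by
      rw [Real.log_mul (by positivity) (Spos _ h2ρ).ne', Real.log_rpow h2ρ0,
        Real.log_mul (by norm_num) hρ0.ne']
    have l2 : Real.log (ρ^(-(2:ℝ)) * S ρ) = -2 * Real.log ρ + Real.log (S ρ) := by
      rw [Real.log_mul (by positivity) (Spos _ hρI).ne', Real.log_rpow hρ0]
    rw [Real.logb, Real.logb, l1, l2]
    field_simp
    ring
  constructor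
  · -- Monotonicity
    intro x hx y hy hxy
    rw [Gform x hx, Gform y hy]
    have hx0 : 0 < x := hx.1
    have memx : x ∈ Set.Ioo (0:ℝ) R := ⟨hx.1, by linarith [hx.2]⟩
    have mem2x : 2*x ∈ Set.Ioo (0:ℝ) R := ⟨by linarith, by linarith [hx.2]⟩
    have memy : y ∈ Set.Ioo (0:ℝ) R := ⟨hy.1, by linarith [hy.2]⟩
    have mem2y : 2*y ∈ Set.Ioo (0:ℝ) R := ⟨by linarith [hy.1], by linarith [hy.2]⟩
    have key := sum_sq_ineq (fun d : Γ => (c d)^2) (fun d : Γ => 2*(d:ℝ))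
      (fun i => sq_nonneg _) hx0 hxy (summS _ mem2x) (summS _ memy) (summS _ memx)
      (summS _ mem2y)
    have key' : S (2*x) * S y ≤ S x * S (2*y) := key
    have hlog := Real.log_le_log (mul_pos (Spos _ mem2x) (Spos _ memy)) key'
    rw [Real.log_mul (Spos _ mem2x).ne' (Spos _ memy).ne',
      Real.log_mul (Spos _ memx).ne' (Spos _ mem2y).ne'] at hlog
    have h2l : (0:ℝ) < 2 * Real.log 2 := by linarith
    rw [div_le_div_iff₀ h2l h2l]
    nlinarith [hlog]
  · -- Limit
    -- gap from discreteness
    have hop : IsOpen {(⟨d₀, hd₀Γ⟩ : Γ)} := isOpen_discrete _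
    rw [Metric.isOpen_iff] at hop
    obtain ⟨δ, hδ0, hball⟩ := hop _ rfl
    have gap : ∀ d : Γ, c d ≠ 0 → (d : ℝ) ≠ d₀ → d₀ + δ ≤ (d:ℝ) := by
      intro d hcd hne
      by_contra hlt
      push_neg at hlt
      have hge : d₀ ≤ (d:ℝ) := hlb ⟨d.2, hcd⟩
      have hdist : d ∈ Metric.ball (⟨d₀, hd₀Γ⟩ : Γ) δ := by
        rw [Metric.mem_ball, Subtype.dist_eq, Real.dist_eq, abs_of_nonneg (by linarith)]
        linarith
      have hdd := Set.mem_singleton_iff.mp (hball hdist)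
      exact hne (congrArg Subtype.val hdd)
    set i₀ : Γ := ⟨d₀, hd₀Γ⟩ with hi₀
    set U : ℝ → ℝ := fun ρ => ∑' d : Γ, (c d)^2 * ρ ^ (2*(d:ℝ) - 2*d₀) with hUdef
    have summU : ∀ ρ ∈ Set.Ioo (0:ℝ) R,
        Summable fun d : Γ => (c d)^2 * ρ ^ (2*(d:ℝ) - 2*d₀) := by
      intro ρ hρ
      have h := (summS ρ hρ).mul_right (ρ ^ (-(2*d₀)))
      refine h.congr fun d => ?_
      rw [mul_assoc, ← Real.rpow_add hρ.1,
        show 2*(d:ℝ) + -(2*d₀) = 2*(d:ℝ) - 2*d₀ by ring]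
    have Sdec : ∀ ρ ∈ Set.Ioo (0:ℝ) R, S ρ = ρ ^ (2*d₀) * U ρ := by
      intro ρ hρ
      rw [hUdef, ← tsum_mul_left]
      exact tsum_congr fun d => by
        rw [show (2:ℝ)*(d:ℝ) = 2*d₀ + (2*(d:ℝ) - 2*d₀) by ring, Real.rpow_add hρ.1]
        ring
    have Upos : ∀ ρ ∈ Set.Ioo (0:ℝ) R, 0 < U ρ := by
      intro ρ hρ
      refine Summable.tsum_pos (summU ρ hρ)
        (fun i => mul_nonneg (sq_nonneg _) (Real.rpow_nonneg hρ.1.le _)) i₀ ?_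
      exact mul_pos (pow_pos hcpos 2) (Real.rpow_pos_of_pos hρ.1 _)
    set ρ₀ : ℝ := R/2 with hρ₀def
    have hρ₀0 : 0 < ρ₀ := half_pos hR
    have hρ₀I : ρ₀ ∈ Set.Ioo (0:ℝ) R := ⟨hρ₀0, by simp [hρ₀def]; linarith⟩
    -- lower and upper bounds on U
    have Ulow : ∀ ρ ∈ Set.Ioo (0:ℝ) R, (c d₀)^2 ≤ U ρ := by
      intro ρ hρ
      have hsplit := Summable.tsum_eq_add_tsum_ite (summU ρ hρ) i₀
      have h0 : (c (i₀:ℝ))^2 * ρ ^ (2*((i₀:Γ):ℝ) - 2*d₀) = (c d₀)^2 := by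
        simp [hi₀, Real.rpow_zero]
      show (c d₀)^2 ≤ ∑' d : Γ, (c d)^2 * ρ ^ (2*(d:ℝ) - 2*d₀)
      rw [hsplit, h0]
      have : 0 ≤ ∑' d : Γ, if d = i₀ then 0 else (c d)^2 * ρ ^ (2*(d:ℝ) - 2*d₀) := by
        refine tsum_nonneg fun d => ?_
        split
        · exact le_refl 0
        · exact mul_nonneg (sq_nonneg _) (Real.rpow_nonneg hρ.1.le _)
      linarith
    have Uup : ∀ ρ, 0 < ρ → ρ ≤ ρ₀ → U ρ ≤ (c d₀)^2 + (ρ/ρ₀) ^ (2*δ) * U ρ₀ := by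
      intro ρ hρpos hρle
      have hρI : ρ ∈ Set.Ioo (0:ℝ) R := ⟨hρpos, lt_of_le_of_lt hρle hρ₀I.2⟩
      have hq0 : 0 < ρ/ρ₀ := div_pos hρpos hρ₀0
      have hq1 : ρ/ρ₀ ≤ 1 := (div_le_one hρ₀0).mpr hρle
      have hsplit := Summable.tsum_eq_add_tsum_ite (summU ρ hρI) i₀
      have h0 : (c (i₀:ℝ))^2 * ρ ^ (2*((i₀:Γ):ℝ) - 2*d₀) = (c d₀)^2 := by
        simp [hi₀, Real.rpow_zero]
      show (∑' d : Γ, (c d)^2 * ρ ^ (2*(d:ℝ) - 2*d₀))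
          ≤ (c d₀)^2 + (ρ/ρ₀) ^ (2*δ) * U ρ₀
      rw [hsplit, h0]
      have tail_le : (∑' d : Γ, if d = i₀ then 0 else (c d)^2 * ρ ^ (2*(d:ℝ) - 2*d₀))
          ≤ ∑' d : Γ, (ρ/ρ₀) ^ (2*δ) * ((c d)^2 * ρ₀ ^ (2*(d:ℝ) - 2*d₀)) := by
        have hsumtail : Summable fun d : Γ =>
            if d = i₀ then 0 else (c d)^2 * ρ ^ (2*(d:ℝ) - 2*d₀) := by
          refine (summU ρ hρI).of_nonneg_of_le (fun d => ?_) (fun d => ?_)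
          · split
            · exact le_refl 0
            · exact mul_nonneg (sq_nonneg _) (Real.rpow_nonneg hρpos.le _)
          · split
            · exact mul_nonneg (sq_nonneg _) (Real.rpow_nonneg hρpos.le _)
            · exact le_refl _
        refine Summable.tsum_le_tsum (fun d => ?_) hsumtail ((summU ρ₀ hρ₀I).mul_left _)
        by_cases hd : d = i₀
        · simp only [hd, if_pos rfl]
          positivity
        · rw [if_neg hd]
          by_cases hcd : c (d:ℝ) = 0
          · rw [hcd]
            simp
          · have hne : (d:ℝ) ≠ d₀ := fun h => hd (Subtype.ext h)
            have hgap := gap d hcd hne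
            have he : 2*δ ≤ 2*(d:ℝ) - 2*d₀ := by linarith
            have hid : ρ₀ * (ρ / ρ₀) = ρ := by field_simp
            calc (c (d:ℝ))^2 * ρ ^ (2*(d:ℝ) - 2*d₀)
                = (c (d:ℝ))^2 * (ρ₀ ^ (2*(d:ℝ) - 2*d₀) * (ρ/ρ₀) ^ (2*(d:ℝ) - 2*d₀)) := by
                  rw [← Real.mul_rpow hρ₀0.le hq0.le, hid]
              _ ≤ (c (d:ℝ))^2 * (ρ₀ ^ (2*(d:ℝ) - 2*d₀) * (ρ/ρ₀) ^ (2*δ)) := by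
                  have := Real.rpow_le_rpow_of_exponent_ge hq0 hq1 he
                  have h1 : 0 ≤ (c (d:ℝ))^2 * ρ₀ ^ (2*(d:ℝ) - 2*d₀) := by positivity
                  nlinarith [Real.rpow_nonneg hρ₀0.le (2*(d:ℝ) - 2*d₀), sq_nonneg (c (d:ℝ))]
              _ = (ρ/ρ₀) ^ (2*δ) * ((c (d:ℝ))^2 * ρ₀ ^ (2*(d:ℝ) - 2*d₀)) := by ring
      rw [tsum_mul_left] at tail_le
      have : U ρ₀ = ∑' d : Γ, (c d)^2 * ρ₀ ^ (2*(d:ℝ) - 2*d₀) := rfl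
      linarith [tail_le]
    -- tendsto of the bound
    have htend0 : Tendsto (fun ρ : ℝ => (ρ/ρ₀) ^ (2*δ)) (nhdsWithin 0 (Set.Ioi 0)) (nhds 0) := by
      have h1 : Tendsto (fun ρ : ℝ => ρ/ρ₀) (nhdsWithin 0 (Set.Ioi 0)) (nhds 0) := by
        have := (continuous_id.div_const ρ₀).tendsto 0
        simpa using this.mono_left nhdsWithin_le_nhds
      have h2 : Tendsto (fun x : ℝ => x ^ (2*δ)) (nhds 0) (nhds 0) := by
        have h3 := (Real.continuousAt_rpow_const 0 (2*δ) (Or.inr (by positivity))).tendsto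
        simpa [Real.zero_rpow (by positivity : (2*δ) ≠ 0)] using h3
      exact h2.comp h1
    have hUtend : Tendsto U (nhdsWithin 0 (Set.Ioi 0)) (nhds ((c d₀)^2)) := by
      have hup : Tendsto (fun ρ : ℝ => (c d₀)^2 + (ρ/ρ₀) ^ (2*δ) * U ρ₀)
          (nhdsWithin 0 (Set.Ioi 0)) (nhds ((c d₀)^2)) := by
        have hconst : Tendsto (fun _ : ℝ => (c d₀)^2) (nhdsWithin 0 (Set.Ioi 0))
            (nhds ((c d₀)^2)) := tendsto_const_nhds
        have := hconst.add (htend0.mul_const (U ρ₀))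
        simpa using this
      refine tendsto_of_tendsto_of_tendsto_of_le_of_le' tendsto_const_nhds hup ?_ ?_
      · filter_upwards [Ioo_mem_nhdsGT_of_mem
          (show (0:ℝ) ∈ Set.Ico (0:ℝ) ρ₀ from ⟨le_refl _, hρ₀0⟩)] with ρ hρ
        exact Ulow ρ ⟨hρ.1, hρ.2.trans hρ₀I.2⟩
      · filter_upwards [Ioo_mem_nhdsGT_of_mem
          (show (0:ℝ) ∈ Set.Ico (0:ℝ) ρ₀ from ⟨le_refl _, hρ₀0⟩)] with ρ hρ
        exact Uup ρ hρ.1 hρ.2.le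
    have hdouble : Tendsto (fun ρ : ℝ => 2*ρ) (nhdsWithin 0 (Set.Ioi 0))
        (nhdsWithin 0 (Set.Ioi 0)) := by
      refine tendsto_nhdsWithin_of_tendsto_nhds_of_eventually_within _ ?_ ?_
      · have hcont : Continuous (fun ρ : ℝ => 2*ρ) := continuous_const.mul continuous_id
        have := hcont.tendsto (0:ℝ)
        simpa using this.mono_left nhdsWithin_le_nhds
      · filter_upwards [self_mem_nhdsWithin] with x hx
        exact mul_pos two_pos (Set.mem_Ioi.mp hx)
    have hU2tend : Tendsto (fun ρ : ℝ => U (2*ρ)) (nhdsWithin 0 (Set.Ioi 0))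
        (nhds ((c d₀)^2)) := hUtend.comp hdouble
    have hcsq : (0:ℝ) < (c d₀)^2 := pow_pos hcpos 2
    have hlogU : Tendsto (fun ρ : ℝ => Real.log (U ρ)) (nhdsWithin 0 (Set.Ioi 0))
        (nhds (Real.log ((c d₀)^2))) := ((Real.continuousAt_log hcsq.ne').tendsto).comp hUtend
    have hlogU2 : Tendsto (fun ρ : ℝ => Real.log (U (2*ρ))) (nhdsWithin 0 (Set.Ioi 0))
        (nhds (Real.log ((c d₀)^2))) := ((Real.continuousAt_log hcsq.ne').tendsto).comp hU2tend
    have heq : (fun ρ : ℝ => d₀ + (Real.log (U (2*ρ)) - Real.log (U ρ)) / (2*Real.log 2))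
        =ᶠ[nhdsWithin 0 (Set.Ioi 0)] G := by
      filter_upwards [Ioo_mem_nhdsGT_of_mem
        (show (0:ℝ) ∈ Set.Ico (0:ℝ) (R/2) from ⟨le_refl _, half_pos hR⟩)] with ρ hρ
      have hρ0 : 0 < ρ := hρ.1
      have h2ρ0 : (0:ℝ) < 2*ρ := by linarith
      have hρI : ρ ∈ Set.Ioo (0:ℝ) R := ⟨hρ0, by linarith [hρ.2]⟩
      have h2ρI : 2*ρ ∈ Set.Ioo (0:ℝ) R := ⟨h2ρ0, by linarith [hρ.2]⟩
      rw [Gform ρ hρ, Sdec _ h2ρI, Sdec _ hρI,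
        Real.log_mul (Real.rpow_pos_of_pos h2ρ0 _).ne' (Upos _ h2ρI).ne',
        Real.log_mul (Real.rpow_pos_of_pos hρ0 _).ne' (Upos _ hρI).ne',
        Real.log_rpow h2ρ0, Real.log_rpow hρ0,
        Real.log_mul (by norm_num : (2:ℝ) ≠ 0) hρ0.ne']
      field_simp
      ring
    refine Tendsto.congr' heq ?_
    have hconst2 : Tendsto (fun _ : ℝ => d₀) (nhdsWithin 0 (Set.Ioi 0)) (nhds d₀) :=
      tendsto_const_nhds
    have hfinal := hconst2.add ((hlogU2.sub hlogU).div_const (2*Real.log 2))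
    simpa using hfinal
end

section
/- Suppose the function G from the preceding setting is constant equal to d on some sub-interval of (0, R/2). Then c_{d'} = 0 for all d' ≠ d; that is, F(ρ) = c_d² ρ^{n+2d} is a pure power. -/
open Set

private lemma max_sub_max_neg (t : ℝ) : max t 0 - max (-t) 0 = t := by
  rcases le_total t 0 with h | h
  · rw [max_eq_right h, max_eq_left (neg_nonneg.mpr h)]; ring
  · rw [max_eq_left h, max_eq_right (neg_nonpos.mpr h)]; ring

/-- in the setting of the decay order
`G(ρ) := 1 + ½ log₂((2ρ)^{−n−2} F(2ρ)) − ½ log₂(ρ^{−n−2} F(ρ))` with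
`F(ρ) = Σ_{d∈Γ} c_d² ρ^{n+2d}` (`Γ ⊂ ℝ` discrete, `c_d ≥ 0` not all zero), if `G` is
constant equal to `d` on some sub-interval of `(0, R/2)`, then `c_{d'} = 0` for all
`d' ≠ d`; that is, `F(ρ) = c_d² ρ^{n+2d}` is a pure power. -/
theorem decay_order_constant_implies_pure_power (Γ : Set ℝ) (hΓ : DiscreteTopology Γ)
    (c : ℝ → ℝ) (hc : ∀ d, 0 ≤ c d) (n R : ℝ) (hR : 0 < R)
    (hsum : ∀ ρ ∈ Set.Ioo (0 : ℝ) R, Summable fun d : Γ => (c d) ^ 2 * ρ ^ (n + 2 * (d : ℝ)))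
    (hne : ∃ d ∈ Γ, c d ≠ 0)
    (F : ℝ → ℝ) (hF : ∀ ρ, F ρ = ∑' d : Γ, (c d) ^ 2 * ρ ^ (n + 2 * (d : ℝ)))
    (G : ℝ → ℝ)
    (hG : ∀ ρ, G ρ = 1 + (1 / 2) * Real.logb 2 ((2 * ρ) ^ (-n - 2) * F (2 * ρ))
        - (1 / 2) * Real.logb 2 (ρ ^ (-n - 2) * F ρ))
    (d a b : ℝ) (ha : 0 < a) (hab : a < b) (hb : b ≤ R / 2)
    (hconst : ∀ ρ ∈ Set.Ioo a b, G ρ = d) :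
    ∀ d' ∈ Γ, d' ≠ d → c d' = 0 := by
  intro d' hd'Γ hd'd
  by_contra hc0
  have hlog2 : (0 : ℝ) < Real.log 2 := Real.log_pos one_lt_two
  -- basic membership facts
  have hmem : ∀ ρ ∈ Set.Ioo a b, 0 < ρ ∧ ρ < R ∧ 2 * ρ < R := by
    intro ρ hρ
    obtain ⟨h1, h2'⟩ := hρ
    have h0 : 0 < ρ := lt_trans ha h1
    exact ⟨h0, by linarith, by linarith⟩
  -- positivity of F
  have hFpos : ∀ ρ, 0 < ρ → ρ < R → 0 < F ρ := by
    intro ρ h0 hρR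
    obtain ⟨d₀, hd₀, hc₀⟩ := hne
    have hsum' := hsum ρ ⟨h0, hρR⟩
    have hterm : 0 < (c d₀) ^ 2 * ρ ^ (n + 2 * d₀) :=
      mul_pos (pow_pos (lt_of_le_of_ne (hc d₀) (Ne.symm hc₀)) 2)
        (Real.rpow_pos_of_pos h0 _)
    rw [hF]
    calc (0:ℝ) < (c d₀) ^ 2 * ρ ^ (n + 2 * d₀) := hterm
      _ ≤ ∑' x : Γ, (c x) ^ 2 * ρ ^ (n + 2 * (x : ℝ)) := by
          exact Summable.le_tsum hsum' ⟨d₀, hd₀⟩ fun j _ => by positivity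
  -- functional equation F(2ρ) = 2^(n+2d) F(ρ) on (a,b)
  have hfe : ∀ ρ ∈ Set.Ioo a b, F (2 * ρ) = (2:ℝ) ^ (n + 2 * d) * F ρ := by
    intro ρ hρ
    obtain ⟨h0, hρR, h2ρR⟩ := hmem ρ hρ
    have hF1 : 0 < F ρ := hFpos ρ h0 hρR
    have hF2 : 0 < F (2 * ρ) := hFpos _ (by linarith) h2ρR
    have hGd := hconst ρ hρ
    rw [hG ρ] at hGd
    have h2ρ : (0:ℝ) < 2 * ρ := by linarith
    have e1 : Real.log ((2 * ρ) ^ (-n - 2) * F (2 * ρ))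
        = (-n - 2) * Real.log (2 * ρ) + Real.log (F (2 * ρ)) := by
      rw [Real.log_mul (by positivity) (ne_of_gt hF2), Real.log_rpow h2ρ]
    have e2 : Real.log (ρ ^ (-n - 2) * F ρ)
        = (-n - 2) * Real.log ρ + Real.log (F ρ) := by
      rw [Real.log_mul (by positivity) (ne_of_gt hF1), Real.log_rpow h0]
    have e3 : Real.log (2 * ρ) = Real.log 2 + Real.log ρ :=
      Real.log_mul two_ne_zero (ne_of_gt h0)
    simp only [Real.logb, e1, e2, e3] at hGd
    have hlogeq : Real.log (F (2 * ρ)) = Real.log (F ρ) + (n + 2 * d) * Real.log 2 := by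
      field_simp at hGd
      nlinarith [hGd, hlog2]
    have : F (2 * ρ) = Real.exp (Real.log (F ρ) + (n + 2 * d) * Real.log 2) := by
      rw [← hlogeq, Real.exp_log hF2]
    rw [this, Real.exp_add, Real.exp_log hF1, Real.rpow_def_of_pos two_pos]
    ring_nf
  -- pick two points
  set ρ₁ := a + (b - a) / 3 with hρ₁def
  set ρ₂ := a + 2 * (b - a) / 3 with hρ₂def
  have hρ₁m : ρ₁ ∈ Set.Ioo a b := ⟨by rw [hρ₁def]; linarith, by rw [hρ₁def]; linarith⟩
  have hρ₂m : ρ₂ ∈ Set.Ioo a b := ⟨by rw [hρ₂def]; linarith, by rw [hρ₂def]; linarith⟩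
  have hρ12 : ρ₁ < ρ₂ := by rw [hρ₁def, hρ₂def]; linarith
  have hρ₁0 : 0 < ρ₁ := (hmem ρ₁ hρ₁m).1
  have hρ₂0 : 0 < ρ₂ := (hmem ρ₂ hρ₂m).1
  -- coefficient functions
  set p : Γ → ℝ := fun x => (c x) ^ 2 * max ((2:ℝ) ^ (n + 2 * (x:ℝ)) - (2:ℝ) ^ (n + 2 * d)) 0
    with hpdef
  set q : Γ → ℝ := fun x => (c x) ^ 2 * max ((2:ℝ) ^ (n + 2 * d) - (2:ℝ) ^ (n + 2 * (x:ℝ))) 0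
    with hqdef
  -- summabilities for ρ ∈ (a,b)
  have hsA : ∀ ρ ∈ Set.Ioo a b,
      Summable (fun x : Γ => (c x) ^ 2 * (2:ℝ) ^ (n + 2 * (x:ℝ)) * ρ ^ (2 * ((x:ℝ) - d))) := by
    intro ρ hρ
    obtain ⟨h0, hρR, h2ρR⟩ := hmem ρ hρ
    have hs := (hsum (2 * ρ) ⟨by linarith, h2ρR⟩).mul_right (ρ ^ (-(n + 2 * d)))
    refine hs.congr fun x => ?_
    have : (2 * ρ : ℝ) ^ (n + 2 * (x:ℝ)) = (2:ℝ) ^ (n + 2 * (x:ℝ)) * ρ ^ (n + 2 * (x:ℝ)) :=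
      Real.mul_rpow (by norm_num) h0.le
    rw [this]
    have : ρ ^ (n + 2 * (x:ℝ)) * ρ ^ (-(n + 2 * d)) = ρ ^ (2 * ((x:ℝ) - d)) := by
      rw [← Real.rpow_add h0]; congr 1; ring
    calc (c x) ^ 2 * ((2:ℝ) ^ (n + 2 * (x:ℝ)) * ρ ^ (n + 2 * (x:ℝ))) * ρ ^ (-(n + 2 * d))
        = (c x) ^ 2 * (2:ℝ) ^ (n + 2 * (x:ℝ)) * (ρ ^ (n + 2 * (x:ℝ)) * ρ ^ (-(n + 2 * d))) := by
          ring
      _ = _ := by rw [this]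
  have hsB : ∀ ρ ∈ Set.Ioo a b,
      Summable (fun x : Γ => (c x) ^ 2 * (2:ℝ) ^ (n + 2 * d) * ρ ^ (2 * ((x:ℝ) - d))) := by
    intro ρ hρ
    obtain ⟨h0, hρR, _⟩ := hmem ρ hρ
    have hs := ((hsum ρ ⟨h0, hρR⟩).mul_right (ρ ^ (-(n + 2 * d)))).mul_left ((2:ℝ) ^ (n + 2 * d))
    refine hs.congr fun x => ?_
    have : ρ ^ (n + 2 * (x:ℝ)) * ρ ^ (-(n + 2 * d)) = ρ ^ (2 * ((x:ℝ) - d)) := by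
      rw [← Real.rpow_add h0]; congr 1; ring
    calc (2:ℝ) ^ (n + 2 * d) * ((c x) ^ 2 * ρ ^ (n + 2 * (x:ℝ)) * ρ ^ (-(n + 2 * d)))
        = (c x) ^ 2 * (2:ℝ) ^ (n + 2 * d) * (ρ ^ (n + 2 * (x:ℝ)) * ρ ^ (-(n + 2 * d))) := by ring
      _ = _ := by rw [this]
  have hpnonneg : ∀ x : Γ, 0 ≤ p x := fun x => by
    simp only [hpdef]; positivity
  have hqnonneg : ∀ x : Γ, 0 ≤ q x := fun x => by
    simp only [hqdef]; positivity
  have hsp : ∀ ρ ∈ Set.Ioo a b, Summable (fun x : Γ => p x * ρ ^ (2 * ((x:ℝ) - d))) := by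
    intro ρ hρ
    have h0 := (hmem ρ hρ).1
    refine Summable.of_nonneg_of_le (fun x => by have := hpnonneg x; positivity)
      (fun x => ?_) (hsA ρ hρ)
    have hmax : max ((2:ℝ) ^ (n + 2 * (x:ℝ)) - (2:ℝ) ^ (n + 2 * d)) 0 ≤ (2:ℝ) ^ (n + 2 * (x:ℝ)) := by
      apply max_le
      · nlinarith [Real.rpow_pos_of_pos (show (0:ℝ) < 2 by norm_num) (n + 2 * d)]
      · exact (Real.rpow_pos_of_pos (by norm_num) _).le
    have hρe : (0:ℝ) ≤ ρ ^ (2 * ((x:ℝ) - d)) := (Real.rpow_pos_of_pos h0 _).le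
    have hcx : (0:ℝ) ≤ (c x)^2 := sq_nonneg _
    simp only [hpdef]
    exact mul_le_mul_of_nonneg_right (mul_le_mul_of_nonneg_left hmax hcx) hρe
  have hsq : ∀ ρ ∈ Set.Ioo a b, Summable (fun x : Γ => q x * ρ ^ (2 * ((x:ℝ) - d))) := by
    intro ρ hρ
    have h0 := (hmem ρ hρ).1
    refine Summable.of_nonneg_of_le (fun x => by have := hqnonneg x; positivity)
      (fun x => ?_) (hsB ρ hρ)
    have hmax : max ((2:ℝ) ^ (n + 2 * d) - (2:ℝ) ^ (n + 2 * (x:ℝ))) 0 ≤ (2:ℝ) ^ (n + 2 * d) := by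
      apply max_le
      · nlinarith [Real.rpow_pos_of_pos (show (0:ℝ) < 2 by norm_num) (n + 2 * (x:ℝ))]
      · exact (Real.rpow_pos_of_pos (by norm_num) _).le
    have hρe : (0:ℝ) ≤ ρ ^ (2 * ((x:ℝ) - d)) := (Real.rpow_pos_of_pos h0 _).le
    have hcx : (0:ℝ) ≤ (c x)^2 := sq_nonneg _
    simp only [hqdef]
    exact mul_le_mul_of_nonneg_right (mul_le_mul_of_nonneg_left hmax hcx) hρe
  -- P = Q on (a,b)
  have hPQ : ∀ ρ ∈ Set.Ioo a b,
      (∑' x : Γ, p x * ρ ^ (2 * ((x:ℝ) - d))) = ∑' x : Γ, q x * ρ ^ (2 * ((x:ℝ) - d)) := by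
    intro ρ hρ
    obtain ⟨h0, hρR, h2ρR⟩ := hmem ρ hρ
    -- A = B
    have hAB : (∑' x : Γ, (c x) ^ 2 * (2:ℝ) ^ (n + 2 * (x:ℝ)) * ρ ^ (2 * ((x:ℝ) - d)))
        = ∑' x : Γ, (c x) ^ 2 * (2:ℝ) ^ (n + 2 * d) * ρ ^ (2 * ((x:ℝ) - d)) := by
      have hfeρ := hfe ρ hρ
      rw [hF (2 * ρ), hF ρ] at hfeρ
      have hL : (∑' x : Γ, (c x) ^ 2 * (2 * ρ) ^ (n + 2 * (x:ℝ)))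
          = ∑' x : Γ, (c x) ^ 2 * (2:ℝ) ^ (n + 2 * (x:ℝ)) * (ρ ^ (n + 2 * d) * ρ ^ (2 * ((x:ℝ) - d))) := by
        refine tsum_congr fun x => ?_
        rw [Real.mul_rpow (by norm_num) h0.le, ← Real.rpow_add h0]
        have : n + 2 * d + 2 * ((x:ℝ) - d) = n + 2 * (x:ℝ) := by ring
        rw [this]; ring
      have hRt : ((2:ℝ) ^ (n + 2 * d) * ∑' x : Γ, (c x) ^ 2 * ρ ^ (n + 2 * (x:ℝ)))
          = ∑' x : Γ, (c x) ^ 2 * (2:ℝ) ^ (n + 2 * d) * (ρ ^ (n + 2 * d) * ρ ^ (2 * ((x:ℝ) - d))) := by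
        rw [← tsum_mul_left]
        refine tsum_congr fun x => ?_
        rw [← Real.rpow_add h0]
        have : n + 2 * d + 2 * ((x:ℝ) - d) = n + 2 * (x:ℝ) := by ring
        rw [this]; ring
      rw [hL, hRt] at hfeρ
      have hρd : (ρ ^ (n + 2 * d) : ℝ) ≠ 0 := ne_of_gt (Real.rpow_pos_of_pos h0 _)
      have hL2 : (∑' x : Γ, (c x) ^ 2 * (2:ℝ) ^ (n + 2 * (x:ℝ)) * (ρ ^ (n + 2 * d) * ρ ^ (2 * ((x:ℝ) - d))))
          = (∑' x : Γ, (c x) ^ 2 * (2:ℝ) ^ (n + 2 * (x:ℝ)) * ρ ^ (2 * ((x:ℝ) - d))) * ρ ^ (n + 2 * d) := by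
        rw [← tsum_mul_right]
        exact tsum_congr fun x => by ring
      have hR2 : (∑' x : Γ, (c x) ^ 2 * (2:ℝ) ^ (n + 2 * d) * (ρ ^ (n + 2 * d) * ρ ^ (2 * ((x:ℝ) - d))))
          = (∑' x : Γ, (c x) ^ 2 * (2:ℝ) ^ (n + 2 * d) * ρ ^ (2 * ((x:ℝ) - d))) * ρ ^ (n + 2 * d) := by
        rw [← tsum_mul_right]
        exact tsum_congr fun x => by ring
      rw [hL2, hR2] at hfeρ
      exact mul_right_cancel₀ hρd hfeρ
    have hsub1 : (∑' x : Γ, p x * ρ ^ (2 * ((x:ℝ) - d))) - ∑' x : Γ, q x * ρ ^ (2 * ((x:ℝ) - d))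
        = ∑' x : Γ, (p x * ρ ^ (2 * ((x:ℝ) - d)) - q x * ρ ^ (2 * ((x:ℝ) - d))) :=
      (Summable.tsum_sub (hsp ρ hρ) (hsq ρ hρ)).symm
    have hsub2 : ∀ x : Γ, p x * ρ ^ (2 * ((x:ℝ) - d)) - q x * ρ ^ (2 * ((x:ℝ) - d))
        = (c x) ^ 2 * (2:ℝ) ^ (n + 2 * (x:ℝ)) * ρ ^ (2 * ((x:ℝ) - d))
          - (c x) ^ 2 * (2:ℝ) ^ (n + 2 * d) * ρ ^ (2 * ((x:ℝ) - d)) := by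
      intro x
      simp only [hpdef, hqdef]
      have := max_sub_max_neg ((2:ℝ) ^ (n + 2 * (x:ℝ)) - (2:ℝ) ^ (n + 2 * d))
      have h2 : max ((2:ℝ) ^ (n + 2 * d) - (2:ℝ) ^ (n + 2 * (x:ℝ))) 0
          = max (-((2:ℝ) ^ (n + 2 * (x:ℝ)) - (2:ℝ) ^ (n + 2 * d))) 0 := by ring_nf
      simp only [h2]
      linear_combination (c x) ^ 2 * ρ ^ (2 * ((x:ℝ) - d)) * this
    have hsub3 : (∑' x : Γ, ((c x) ^ 2 * (2:ℝ) ^ (n + 2 * (x:ℝ)) * ρ ^ (2 * ((x:ℝ) - d))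
          - (c x) ^ 2 * (2:ℝ) ^ (n + 2 * d) * ρ ^ (2 * ((x:ℝ) - d))))
        = (∑' x : Γ, (c x) ^ 2 * (2:ℝ) ^ (n + 2 * (x:ℝ)) * ρ ^ (2 * ((x:ℝ) - d)))
          - ∑' x : Γ, (c x) ^ 2 * (2:ℝ) ^ (n + 2 * d) * ρ ^ (2 * ((x:ℝ) - d)) :=
      Summable.tsum_sub (hsA ρ hρ) (hsB ρ hρ)
    have : (∑' x : Γ, p x * ρ ^ (2 * ((x:ℝ) - d))) - ∑' x : Γ, q x * ρ ^ (2 * ((x:ℝ) - d)) = 0 := by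
      rw [hsub1, tsum_congr hsub2, hsub3, hAB, sub_self]
    linarith
  -- monotone comparisons
  have hple : ∀ x : Γ, p x * ρ₁ ^ (2 * ((x:ℝ) - d)) ≤ p x * ρ₂ ^ (2 * ((x:ℝ) - d)) := by
    intro x
    rcases (hpnonneg x).lt_or_eq with hpos | heq
    · have hmaxpos : 0 < max ((2:ℝ) ^ (n + 2 * (x:ℝ)) - (2:ℝ) ^ (n + 2 * d)) 0 := by
        by_contra hle
        push_neg at hle
        have : p x = 0 := by
          simp only [hpdef]
          have : max ((2:ℝ) ^ (n + 2 * (x:ℝ)) - (2:ℝ) ^ (n + 2 * d)) 0 = 0 :=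
            le_antisymm hle (le_max_right _ _)
          simp [this]
        linarith [hpos, this]
      have ht : (2:ℝ) ^ (n + 2 * d) < (2:ℝ) ^ (n + 2 * (x:ℝ)) := by
        rcases lt_max_iff.mp hmaxpos with h | h
        · linarith
        · exact absurd h (lt_irrefl 0)
      have hdx : d < (x:ℝ) := by
        have := (Real.rpow_lt_rpow_left_iff one_lt_two).mp ht
        linarith
      have he : (0:ℝ) < 2 * ((x:ℝ) - d) := by linarith
      exact mul_le_mul_of_nonneg_left
        (Real.rpow_le_rpow hρ₁0.le hρ12.le he.le) (hpnonneg x)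
    · rw [← heq]; simp
  have hqle : ∀ x : Γ, q x * ρ₂ ^ (2 * ((x:ℝ) - d)) ≤ q x * ρ₁ ^ (2 * ((x:ℝ) - d)) := by
    intro x
    rcases (hqnonneg x).lt_or_eq with hpos | heq
    · have hmaxpos : 0 < max ((2:ℝ) ^ (n + 2 * d) - (2:ℝ) ^ (n + 2 * (x:ℝ))) 0 := by
        by_contra hle
        push_neg at hle
        have : q x = 0 := by
          simp only [hqdef]
          have : max ((2:ℝ) ^ (n + 2 * d) - (2:ℝ) ^ (n + 2 * (x:ℝ))) 0 = 0 :=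
            le_antisymm hle (le_max_right _ _)
          simp [this]
        linarith [hpos, this]
      have ht : (2:ℝ) ^ (n + 2 * (x:ℝ)) < (2:ℝ) ^ (n + 2 * d) := by
        rcases lt_max_iff.mp hmaxpos with h | h
        · linarith
        · exact absurd h (lt_irrefl 0)
      have hdx : (x:ℝ) < d := by
        have := (Real.rpow_lt_rpow_left_iff one_lt_two).mp ht
        linarith
      have he : 2 * ((x:ℝ) - d) < 0 := by linarith
      exact mul_le_mul_of_nonneg_left
        (Real.rpow_le_rpow_of_nonpos hρ₁0 hρ12.le he.le) (hqnonneg x)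
    · rw [← heq]; simp
  -- combine: P ρ₁ = P ρ₂ and Q ρ₂ = Q ρ₁
  have hP12 : (∑' x : Γ, p x * ρ₁ ^ (2 * ((x:ℝ) - d))) ≤ ∑' x : Γ, p x * ρ₂ ^ (2 * ((x:ℝ) - d)) :=
    Summable.tsum_le_tsum hple (hsp ρ₁ hρ₁m) (hsp ρ₂ hρ₂m)
  have hQ21 : (∑' x : Γ, q x * ρ₂ ^ (2 * ((x:ℝ) - d))) ≤ ∑' x : Γ, q x * ρ₁ ^ (2 * ((x:ℝ) - d)) :=
    Summable.tsum_le_tsum hqle (hsq ρ₂ hρ₂m) (hsq ρ₁ hρ₁m)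
  have hPeq : (∑' x : Γ, p x * ρ₁ ^ (2 * ((x:ℝ) - d))) = ∑' x : Γ, p x * ρ₂ ^ (2 * ((x:ℝ) - d)) := by
    have h1 := hPQ ρ₁ hρ₁m
    have h2 := hPQ ρ₂ hρ₂m
    linarith
  have hQeq : (∑' x : Γ, q x * ρ₂ ^ (2 * ((x:ℝ) - d))) = ∑' x : Γ, q x * ρ₁ ^ (2 * ((x:ℝ) - d)) := by
    have h1 := hPQ ρ₁ hρ₁m
    have h2 := hPQ ρ₂ hρ₂m
    linarith
  -- strict inequality at d'
  set x₀ : Γ := ⟨d', hd'Γ⟩ with hx₀def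
  have hcx₀ : (0:ℝ) < (c d') ^ 2 := pow_pos (lt_of_le_of_ne (hc d') (Ne.symm hc0)) 2
  rcases lt_or_gt_of_ne hd'd with hlt | hgt
  · -- d' < d : use q
    have ht : (2:ℝ) ^ (n + 2 * d') < (2:ℝ) ^ (n + 2 * d) :=
      Real.rpow_lt_rpow_of_exponent_lt one_lt_two (by linarith)
    have hq₀ : 0 < q x₀ := by
      simp only [hqdef]
      have : max ((2:ℝ) ^ (n + 2 * d) - (2:ℝ) ^ (n + 2 * ((x₀:ℝ))) ) 0
          = (2:ℝ) ^ (n + 2 * d) - (2:ℝ) ^ (n + 2 * ((x₀:ℝ))) := by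
        apply max_eq_left
        simp only [hx₀def]
        linarith
      rw [this]
      simp only [hx₀def]
      exact mul_pos hcx₀ (by linarith)
    have he : 2 * (((x₀:ℝ)) - d) < 0 := by simp only [hx₀def]; linarith
    have hstrict : q x₀ * ρ₂ ^ (2 * ((x₀:ℝ) - d)) < q x₀ * ρ₁ ^ (2 * ((x₀:ℝ) - d)) :=
      mul_lt_mul_of_pos_left (Real.rpow_lt_rpow_of_neg hρ₁0 hρ12 he) hq₀
    have := Summable.tsum_lt_tsum hqle hstrict (hsq ρ₂ hρ₂m) (hsq ρ₁ hρ₁m)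
    linarith [hQeq]
  · -- d' > d : use p
    have ht : (2:ℝ) ^ (n + 2 * d) < (2:ℝ) ^ (n + 2 * d') :=
      Real.rpow_lt_rpow_of_exponent_lt one_lt_two (by linarith)
    have hp₀ : 0 < p x₀ := by
      simp only [hpdef]
      have : max ((2:ℝ) ^ (n + 2 * ((x₀:ℝ))) - (2:ℝ) ^ (n + 2 * d)) 0
          = (2:ℝ) ^ (n + 2 * ((x₀:ℝ))) - (2:ℝ) ^ (n + 2 * d) := by
        apply max_eq_left
        simp only [hx₀def]
        linarith
      rw [this]
      simp only [hx₀def]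
      exact mul_pos hcx₀ (by linarith)
    have he : (0:ℝ) < 2 * (((x₀:ℝ)) - d) := by simp only [hx₀def]; linarith
    have hstrict : p x₀ * ρ₁ ^ (2 * ((x₀:ℝ) - d)) < p x₀ * ρ₂ ^ (2 * ((x₀:ℝ) - d)) :=
      mul_lt_mul_of_pos_left (Real.rpow_lt_rpow hρ₁0.le hρ12 he) hp₀
    have := Summable.tsum_lt_tsum hple hstrict (hsp ρ₁ hρ₁m) (hsp ρ₂ hρ₂m)
    linarith [hPeq]
end
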